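/- For every n ≥ 1, the quotient of the set of n-formulas of L_□ by the relation of S5[Con]-provable equivalence has exactly 2^(3^n · 2^(3^n − 1)) elements. -/

import Mathlib

namespace KripkeModal

/-- Formulas of the modal language `L_□`: atoms `T(x)`, `F(x)` for variables
`x : ℕ`, negation, conjunction, and box. -/
inductive Fml : Type
  | tt : ℕ → Fml   -- T(x)
  | ff : ℕ → Fml   -- F(x)
  | neg : Fml → Fml
  | and : Fml → Fml → Fml
  | box : Fml → Fml
deriving DecidableEq

namespace Fml

/-- Material implication, defined from `¬, ∧`. -/
def imp (φ ψ : Fml) : Fml := neg (and φ (neg ψ))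

/-- Disjunction, defined from `¬, ∧`. -/
def or (φ ψ : Fml) : Fml := neg (and (neg φ) (neg ψ))

/-- Biconditional. -/
def iff (φ ψ : Fml) : Fml := and (imp φ ψ) (imp ψ φ)

/-- Diamond: `◇φ := ¬□¬φ`. -/
def dia (φ : Fml) : Fml := neg (box (neg φ))

/-- `N(x) := ¬T(x) ∧ ¬F(x)`. -/
def Nf (x : ℕ) : Fml := and (neg (tt x)) (neg (ff x))

/-- A fixed contradiction. -/
def bot : Fml := and (tt 0) (neg (tt 0))

end Fml

open Fml

/-- Evaluate a formula propositionally under a valuation `v` of the "atoms":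
the atomic formulas `T(x)`, `F(x)` and all boxed formulas are treated as
propositional atoms. -/
def evalProp (v : Fml → Bool) : Fml → Bool
  | Fml.neg φ => !(evalProp v φ)
  | Fml.and φ ψ => evalProp v φ && evalProp v ψ
  | φ => v φ

/-- A formula is a substitution instance of a classical propositional tautology
iff it evaluates to true under every propositional valuation of its atoms. -/
def Tautology (φ : Fml) : Prop := ∀ v : Fml → Bool, evalProp v φ = true

/-- Provability in the modal system `S5[Ax]`: the smallest set of formulas
containing all substitution instances of propositional tautologies, all
instances of K, T and 5, all formulas in `Ax`, closed under modus ponens and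
necessitation.  Taking `Ax = ∅` gives `S5` itself. -/
inductive Prv (Ax : Set Fml) : Fml → Prop
  | taut {φ} : Tautology φ → Prv Ax φ
  | axK (A B : Fml) : Prv Ax (imp (box (imp A B)) (imp (box A) (box B)))
  | axT (A : Fml) : Prv Ax (imp (box A) A)
  | ax5 (A : Fml) : Prv Ax (imp (dia A) (box (dia A)))
  | axm {φ} : φ ∈ Ax → Prv Ax φ
  | mp {A B} : Prv Ax (imp A B) → Prv Ax A → Prv Ax B
  | nec {A} : Prv Ax A → Prv Ax (box A)

/-- A system is consistent if it does not prove a contradiction. -/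
def Consistent (Ax : Set Fml) : Prop := ¬ Prv Ax Fml.bot

/-- The axiom schema `Con`: `¬(T(x) ∧ F(x))`. -/
def ConAx : Set Fml := { φ | ∃ x : ℕ, φ = neg (and (tt x) (ff x)) }

/-- The axiom schema `Ground`: `(◇T(x) ∧ ◇F(x)) → ◇N(x)`. -/
def GroundAx : Set Fml :=
  { φ | ∃ x : ℕ, φ = imp (and (dia (tt x)) (dia (ff x))) (dia (Nf x)) }

/-- Conjunction of a list of formulas (empty conjunction is `¬⊥`). -/
def bigAnd : List Fml → Fml
  | [] => Fml.neg Fml.bot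
  | [φ] => φ
  | φ :: ψ :: rest => Fml.and φ (bigAnd (ψ :: rest))

/-- Disjunction of a list of formulas (the empty disjunction is the fixed
contradiction `⊥`). -/
def bigOr : List Fml → Fml
  | [] => Fml.bot
  | [φ] => φ
  | φ :: ψ :: rest => Fml.or φ (bigOr (ψ :: rest))

/-- The axiom schema `Min_n`: all instances
`(◇N(x_1) ∧ … ∧ ◇N(x_n)) → ◇(N(x_1) ∧ … ∧ N(x_n))` obtained by substituting
arbitrary (not necessarily distinct) variables for `x_1, …, x_n`. -/
def MinAx (n : ℕ) : Set Fml :=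
  { φ | ∃ l : List ℕ, l.length = n ∧
      φ = imp (bigAnd (l.map (fun x => dia (Nf x)))) (dia (bigAnd (l.map Nf))) }

/-- A formula is extensional if it contains no `□`. -/
def Extensional : Fml → Prop
  | tt _ => True
  | ff _ => True
  | Fml.neg φ => Extensional φ
  | Fml.and φ ψ => Extensional φ ∧ Extensional ψ
  | box _ => False

/-- A formula is intensional if every atomic subformula occurs within the
scope of a `□`. -/
def Intensional : Fml → Prop
  | tt _ => False
  | ff _ => False
  | Fml.neg φ => Intensional φ
  | Fml.and φ ψ => Intensional φ ∧ Intensional ψ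
  | box _ => True

/-- The set of variables occurring in a formula. -/
def vars : Fml → Set ℕ
  | tt x => {x}
  | ff x => {x}
  | Fml.neg φ => vars φ
  | Fml.and φ ψ => vars φ ∪ vars ψ
  | box φ => vars φ

/-- An `n`-formula: one whose atoms use only the variables `x_1, …, x_n`. -/
def IsNFormula (n : ℕ) (φ : Fml) : Prop := vars φ ⊆ {x | 1 ≤ x ∧ x ≤ n}

/-- A 1-formula: one whose atoms use only the single variable `x_1`. -/
abbrev Is1Formula (φ : Fml) : Prop := IsNFormula 1 φ

/-- `φ` is `Γ`-maximal for the system `S5[Ax]`. -/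
def GammaMaximal (Ax : Set Fml) (Γ : Set Fml) (φ : Fml) : Prop :=
  Consistent (Ax ∪ {φ}) ∧ φ ∈ Γ ∧
    ∀ ψ ∈ Γ, Prv Ax (imp φ ψ) ∨ Prv Ax (imp φ (neg ψ))

/-- Extensional `n`-isolators for `S5[Ax]`. -/
def ExtIsolator (n : ℕ) (Ax : Set Fml) (φ : Fml) : Prop :=
  GammaMaximal Ax {ψ | Extensional ψ ∧ IsNFormula n ψ} φ

/-- Intensional `n`-isolators for `S5[Ax]`. -/
def IntIsolator (n : ℕ) (Ax : Set Fml) (φ : Fml) : Prop :=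
  GammaMaximal Ax {ψ | Intensional ψ ∧ IsNFormula n ψ} φ

/-- An `n`-isolator for `S5[Ax]`: a consistent conjunction `ε ∧ ι` of an
extensional `n`-isolator and an intensional `n`-isolator. -/
def Isolator (n : ℕ) (Ax : Set Fml) (φ : Fml) : Prop :=
  ∃ ε ι, ExtIsolator n Ax ε ∧ IntIsolator n Ax ι ∧
    φ = Fml.and ε ι ∧ Consistent (Ax ∪ {φ})

/-- Satisfaction in a model `(W, V)` (with `V = (V1, V2)`) at a world `w`. -/
def Sat {W : Type*} (V1 V2 : ℕ → Set W) : W → Fml → Prop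
  | w, tt x => w ∈ V1 x
  | w, ff x => w ∈ V2 x
  | w, Fml.neg φ => ¬ Sat V1 V2 w φ
  | w, Fml.and φ ψ => Sat V1 V2 w φ ∧ Sat V1 V2 w ψ
  | _, box φ => ∀ v, Sat V1 V2 v φ

/-- The variable assignment satisfies the `Con` constraint. -/
def ConC {W : Type*} (V1 V2 : ℕ → Set W) : Prop := ∀ x, V1 x ∩ V2 x = ∅

/-- The variable assignment satisfies the `Ground` constraint. -/
def GroundC {W : Type*} (V1 V2 : ℕ → Set W) : Prop :=
  ∀ x, (V1 x).Nonempty → (V2 x).Nonempty → ((V1 x ∪ V2 x)ᶜ : Set W).Nonempty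

/-- The variable assignment satisfies the `Min` constraint. -/
def MinC {W : Type*} (V1 V2 : ℕ → Set W) : Prop :=
  ∀ l : List ℕ, l ≠ [] → (∀ x ∈ l, ((V1 x ∪ V2 x)ᶜ : Set W).Nonempty) →
    (⋂ x ∈ l, ((V1 x ∪ V2 x)ᶜ : Set W)).Nonempty

/-- The prime conditions for a subset `S` of the tensor `[3]^n`, realized as
`Fin n → Fin 3` where the value `0` stands for the layer `T`, `1` for `F`,
and `2` for `N` (i.e. `1, 2, 3` in the paper's numbering). -/
def PrimeConditions (n : ℕ) (S : Set (Fin n → Fin 3)) : Prop :=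
  S.Nonempty ∧
  (∀ j : Fin n, (S ∩ {a | a j = 0}).Nonempty → (S ∩ {a | a j = 1}).Nonempty →
      (S ∩ {a | a j = 2}).Nonempty) ∧
  ∀ J : Set (Fin n), J.Nonempty →
    (∀ j ∈ J, (S ∩ {a | a j = 2}).Nonempty) →
    (S ∩ ⋂ j ∈ J, {a | a j = 2}).Nonempty

/-- `χ_1 = T`, `χ_2 = F`, `χ_3 = N` (with `Fin 3` values `0, 1, 2`). -/
def chi (k : Fin 3) (x : ℕ) : Fml :=
  if k = 0 then tt x else if k = 1 then ff x else Nf x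

/-- The extensional `n`-isolator `φ_a = χ_{a_1}(x_1) ∧ … ∧ χ_{a_n}(x_n)`
associated with a tuple `a ∈ [3]^n`. -/
def tupleFml {n : ℕ} (a : Fin n → Fin 3) : Fml :=
  bigAnd ((List.finRange n).map (fun i => chi (a i) (i.1 + 1)))

open Classical in
/-- The pre-`n`-isolator of `S ⊆ [3]^n`:
`⋀_{a ∈ S} ◇φ_a ∧ ⋀_{a ∉ S} ¬◇φ_a`. -/
noncomputable def preIsolator (n : ℕ) (S : Set (Fin n → Fin 3)) : Fml :=
  bigAnd (((Finset.univ : Finset (Fin n → Fin 3)).toList).map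
    (fun a => if a ∈ S then dia (tupleFml a) else Fml.neg (dia (tupleFml a))))

open Fml

section Toolkit
variable {Ax : Set Fml}

@[simp] lemma evalProp_tt (v : Fml → Bool) (x : ℕ) : evalProp v (tt x) = v (tt x) := rfl
@[simp] lemma evalProp_ff (v : Fml → Bool) (x : ℕ) : evalProp v (ff x) = v (ff x) := rfl
@[simp] lemma evalProp_box (v : Fml → Bool) (φ : Fml) :
    evalProp v (box φ) = v (box φ) := rfl

@[simp] lemma evalProp_neg (v : Fml → Bool) (φ : Fml) :
    evalProp v (Fml.neg φ) = !evalProp v φ := rfl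

@[simp] lemma evalProp_and (v : Fml → Bool) (φ ψ : Fml) :
    evalProp v (Fml.and φ ψ) = (evalProp v φ && evalProp v ψ) := rfl

@[simp] lemma evalProp_imp (v : Fml → Bool) (φ ψ : Fml) :
    evalProp v (imp φ ψ) = (!evalProp v φ || evalProp v ψ) := by
  simp [Fml.imp]

@[simp] lemma evalProp_or (v : Fml → Bool) (φ ψ : Fml) :
    evalProp v (Fml.or φ ψ) = (evalProp v φ || evalProp v ψ) := by
  simp [Fml.or]

@[simp] lemma evalProp_iff (v : Fml → Bool) (φ ψ : Fml) :
    evalProp v (Fml.iff φ ψ) = (evalProp v φ == evalProp v ψ) := by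
  simp only [Fml.iff, evalProp_and, evalProp_imp]
  cases evalProp v φ <;> cases evalProp v ψ <;> rfl

@[simp] lemma evalProp_bot (v : Fml → Bool) : evalProp v Fml.bot = false := by
  simp [Fml.bot]

@[simp] lemma evalProp_dia (v : Fml → Bool) (φ : Fml) :
    evalProp v (dia φ) = !(v (box (Fml.neg φ))) := rfl

lemma evalProp_bigAnd (v : Fml → Bool) (l : List Fml) :
    evalProp v (bigAnd l) = l.all (evalProp v) := by
  induction l with
  | nil => simp [bigAnd]
  | cons φ rest ih =>
      cases rest with
      | nil => simp [bigAnd]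
      | cons ψ rest' => simp [bigAnd, ih]

lemma evalProp_bigOr (v : Fml → Bool) (l : List Fml) :
    evalProp v (bigOr l) = l.any (evalProp v) := by
  induction l with
  | nil => simp [bigOr]
  | cons φ rest ih =>
      cases rest with
      | nil => simp [bigOr]
      | cons ψ rest' => simp [bigOr, ih]

/-! ### Propositional derived rules -/

lemma imp_trans {A B C : Fml} (h1 : Prv Ax (imp A B)) (h2 : Prv Ax (imp B C)) :
    Prv Ax (imp A C) := by
  have t : Prv Ax (imp (imp A B) (imp (imp B C) (imp A C))) := by
    refine Prv.taut fun v => ?_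
    simp only [evalProp_imp]
    cases evalProp v A <;> cases evalProp v B <;> cases evalProp v C <;> rfl
  exact (t.mp h1).mp h2

lemma contrapos {A B : Fml} (h : Prv Ax (imp A B)) :
    Prv Ax (imp (Fml.neg B) (Fml.neg A)) := by
  have t : Prv Ax (imp (imp A B) (imp (Fml.neg B) (Fml.neg A))) := by
    refine Prv.taut fun v => ?_
    simp only [evalProp_imp, evalProp_neg]
    cases evalProp v A <;> cases evalProp v B <;> rfl
  exact t.mp h

lemma dne {A : Fml} : Prv Ax (imp (Fml.neg (Fml.neg A)) A) := by
  refine Prv.taut fun v => ?_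
  simp only [evalProp_imp, evalProp_neg]
  cases evalProp v A <;> rfl

lemma dni {A : Fml} : Prv Ax (imp A (Fml.neg (Fml.neg A))) := by
  refine Prv.taut fun v => ?_
  simp only [evalProp_imp, evalProp_neg]
  cases evalProp v A <;> rfl

lemma and_intro_rule {A B : Fml} (h1 : Prv Ax A) (h2 : Prv Ax B) :
    Prv Ax (Fml.and A B) := by
  have t : Prv Ax (imp A (imp B (Fml.and A B))) := by
    refine Prv.taut fun v => ?_
    simp only [evalProp_imp, evalProp_and]
    cases evalProp v A <;> cases evalProp v B <;> rfl
  exact (t.mp h1).mp h2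

lemma and_left {A B : Fml} : Prv Ax (imp (Fml.and A B) A) := by
  refine Prv.taut fun v => ?_
  simp only [evalProp_imp, evalProp_and]
  cases evalProp v A <;> cases evalProp v B <;> rfl

lemma and_right {A B : Fml} : Prv Ax (imp (Fml.and A B) B) := by
  refine Prv.taut fun v => ?_
  simp only [evalProp_imp, evalProp_and]
  cases evalProp v A <;> cases evalProp v B <;> rfl

lemma bigAnd_intro {l : List Fml} (h : ∀ φ ∈ l, Prv Ax φ) : Prv Ax (bigAnd l) := by
  induction l with
  | nil =>
      refine Prv.taut fun v => ?_
      simp [bigAnd]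
  | cons φ rest ih =>
      cases rest with
      | nil => exact h φ (by simp)
      | cons ψ rest' =>
          show Prv Ax (Fml.and φ (bigAnd (ψ :: rest')))
          exact and_intro_rule (h φ (by simp))
            (ih fun χ hχ => h χ (List.mem_cons_of_mem _ hχ))

lemma bigAnd_elim {l : List Fml} {φ : Fml} (h : φ ∈ l) :
    Prv Ax (imp (bigAnd l) φ) := by
  refine Prv.taut fun v => ?_
  simp only [evalProp_imp, evalProp_bigAnd]
  cases hall : l.all (evalProp v) with
  | false => rfl
  | true =>
      have := (List.all_eq_true.mp hall) φ h
      simp [this]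

lemma bigOr_intro {l : List Fml} {φ : Fml} (h : φ ∈ l) :
    Prv Ax (imp φ (bigOr l)) := by
  refine Prv.taut fun v => ?_
  simp only [evalProp_imp, evalProp_bigOr]
  cases hφ : evalProp v φ with
  | false => rfl
  | true =>
      have : l.any (evalProp v) = true := List.any_eq_true.mpr ⟨φ, h, hφ⟩
      simp [this]

lemma bigOr_elim {l : List Fml} {C : Fml} (h : ∀ φ ∈ l, Prv Ax (imp φ C)) :
    Prv Ax (imp (bigOr l) C) := by
  have t : Prv Ax (imp (bigAnd (l.map (fun φ => imp φ C))) (imp (bigOr l) C)) := by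
    refine Prv.taut fun v => ?_
    simp only [evalProp_imp, evalProp_bigAnd, evalProp_bigOr]
    cases hall : (l.map (fun φ => imp φ C)).all (evalProp v) with
    | false => rfl
    | true =>
        cases hany : l.any (evalProp v) with
        | false => rfl
        | true =>
            obtain ⟨φ, hφl, hφ⟩ := List.any_eq_true.mp hany
            have := (List.all_eq_true.mp hall) (imp φ C) (List.mem_map_of_mem hφl)
            simp only [evalProp_imp, hφ, Bool.not_true, Bool.false_or] at this
            simp [this]
  refine t.mp (bigAnd_intro ?_)
  intro ψ hψ
  obtain ⟨φ, hφl, rfl⟩ := List.mem_map.mp hψ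
  exact h φ hφl

/-! ### Modal derived rules -/

lemma rm {A B : Fml} (h : Prv Ax (imp A B)) : Prv Ax (imp (box A) (box B)) :=
  (Prv.axK A B).mp (Prv.nec h)

lemma dia_rm {A B : Fml} (h : Prv Ax (imp A B)) : Prv Ax (imp (dia A) (dia B)) :=
  contrapos (rm (contrapos h))

/-- `A → ◇A`. -/
lemma imp_dia_self {A : Fml} : Prv Ax (imp A (dia A)) := by
  have h := Prv.axT (Ax := Ax) (Fml.neg A)
  have t : Prv Ax (imp (imp (box (Fml.neg A)) (Fml.neg A)) (imp A (dia A))) := by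
    refine Prv.taut fun v => ?_
    simp only [evalProp_imp, evalProp_neg, evalProp_dia, evalProp_box]
    cases evalProp v A <;> cases v (box (Fml.neg A)) <;> rfl
  exact t.mp h

/-- `◇□B → □B`. -/
lemma dia_box_imp_box {B : Fml} : Prv Ax (imp (dia (box B)) (box B)) := by
  have h1 : Prv Ax (imp (box B) (box (Fml.neg (Fml.neg B)))) := rm dni
  have h2 : Prv Ax (imp (dia (Fml.neg B)) (Fml.neg (box B))) := contrapos h1
  have h3 : Prv Ax (imp (box (dia (Fml.neg B))) (box (Fml.neg (box B)))) := rm h2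
  have h4 : Prv Ax (imp (dia (Fml.neg B)) (box (dia (Fml.neg B)))) := Prv.ax5 _
  have h5 : Prv Ax (imp (dia (Fml.neg B)) (box (Fml.neg (box B)))) := imp_trans h4 h3
  have h6 : Prv Ax (imp (dia (box B)) (Fml.neg (dia (Fml.neg B)))) := contrapos h5
  have h7 : Prv Ax (imp (Fml.neg (dia (Fml.neg B))) (box (Fml.neg (Fml.neg B)))) := dne
  have h8 : Prv Ax (imp (box (Fml.neg (Fml.neg B))) (box B)) := rm dne
  exact imp_trans h6 (imp_trans h7 h8)

/-- `□A → □□A`. -/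
lemma four {A : Fml} : Prv Ax (imp (box A) (box (box A))) := by
  have b1 : Prv Ax (imp (box A) (dia (box A))) := imp_dia_self
  have b2 : Prv Ax (imp (dia (box A)) (box (dia (box A)))) := Prv.ax5 _
  have b3 : Prv Ax (imp (box (dia (box A))) (box (box A))) := rm dia_box_imp_box
  exact imp_trans b1 (imp_trans b2 b3)

/-- `¬◇A → □¬◇A`. -/
lemma neg_dia_rigid {A : Fml} : Prv Ax (imp (Fml.neg (dia A)) (box (Fml.neg (dia A)))) := by
  have h1 : Prv Ax (imp (Fml.neg (dia A)) (box (Fml.neg A))) := dne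
  have h2 : Prv Ax (imp (box (Fml.neg A)) (box (box (Fml.neg A)))) := four
  have h3 : Prv Ax (imp (box (box (Fml.neg A))) (box (Fml.neg (dia A)))) := rm dni
  exact imp_trans h1 (imp_trans h2 h3)

/-- `□A ∧ □B → □(A ∧ B)`. -/
lemma box_and {A B : Fml} : Prv Ax (imp (Fml.and (box A) (box B)) (box (Fml.and A B))) := by
  have h1 : Prv Ax (imp B (imp A (Fml.and A B))) := by
    refine Prv.taut fun v => ?_
    simp only [evalProp_imp, evalProp_and]
    cases evalProp v A <;> cases evalProp v B <;> rfl
  have h2 : Prv Ax (imp (box B) (box (imp A (Fml.and A B)))) := rm h1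
  have h3 := Prv.axK (Ax := Ax) A (Fml.and A B)
  have h4 : Prv Ax (imp (box B) (imp (box A) (box (Fml.and A B)))) := imp_trans h2 h3
  have t : Prv Ax (imp (imp (box B) (imp (box A) (box (Fml.and A B))))
      (imp (Fml.and (box A) (box B)) (box (Fml.and A B)))) := by
    refine Prv.taut fun v => ?_
    simp only [evalProp_imp, evalProp_and, evalProp_box]
    cases v (box A) <;> cases v (box B) <;> cases v (box (Fml.and A B)) <;> rfl
  exact t.mp h4

/-- `□(A → C) → (◇A → ◇C)`. -/
lemma k_dia {A C : Fml} : Prv Ax (imp (box (imp A C)) (imp (dia A) (dia C))) := by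
  have k1 : Prv Ax (imp (imp A C) (imp (Fml.neg C) (Fml.neg A))) := by
    refine Prv.taut fun v => ?_
    simp only [evalProp_imp, evalProp_neg]
    cases evalProp v A <;> cases evalProp v C <;> rfl
  have k2 : Prv Ax (imp (box (imp A C)) (box (imp (Fml.neg C) (Fml.neg A)))) := rm k1
  have k3 := Prv.axK (Ax := Ax) (Fml.neg C) (Fml.neg A)
  have k4 : Prv Ax (imp (box (imp A C)) (imp (box (Fml.neg C)) (box (Fml.neg A)))) :=
    imp_trans k2 k3
  have t : Prv Ax (imp (imp (box (imp A C)) (imp (box (Fml.neg C)) (box (Fml.neg A))))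
      (imp (box (imp A C)) (imp (dia A) (dia C)))) := by
    refine Prv.taut fun v => ?_
    simp only [evalProp_imp, evalProp_dia, evalProp_box]
    cases v (box (imp A C)) <;> cases v (box (Fml.neg C)) <;> cases v (box (Fml.neg A)) <;> rfl
  exact t.mp k4

/-- `◇A ∧ □B → ◇(A ∧ B)`. -/
lemma dia_and_box {A B : Fml} :
    Prv Ax (imp (Fml.and (dia A) (box B)) (dia (Fml.and A B))) := by
  have h1 : Prv Ax (imp B (imp A (Fml.and A B))) := by
    refine Prv.taut fun v => ?_
    simp only [evalProp_imp, evalProp_and]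
    cases evalProp v A <;> cases evalProp v B <;> rfl
  have h2 : Prv Ax (imp (box B) (box (imp A (Fml.and A B)))) := rm h1
  have h3 : Prv Ax (imp (box B) (imp (dia A) (dia (Fml.and A B)))) := imp_trans h2 k_dia
  have t : Prv Ax (imp (imp (box B) (imp (dia A) (dia (Fml.and A B))))
      (imp (Fml.and (dia A) (box B)) (dia (Fml.and A B)))) := by
    refine Prv.taut fun v => ?_
    simp only [evalProp_imp, evalProp_and, evalProp_dia, evalProp_box]
    cases v (box B) <;> cases v (box (Fml.neg A)) <;> cases v (box (Fml.neg (Fml.and A B))) <;> rfl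
  exact t.mp h3

/-- rigidity of a conjunction of rigid formulas -/
lemma bigAnd_rigid {l : List Fml} (h : ∀ φ ∈ l, Prv Ax (imp φ (box φ))) :
    Prv Ax (imp (bigAnd l) (box (bigAnd l))) := by
  induction l with
  | nil =>
      have h1 : Prv Ax (bigAnd ([] : List Fml)) := bigAnd_intro (by simp)
      have h2 : Prv Ax (box (bigAnd ([] : List Fml))) := Prv.nec h1
      have t : Prv Ax (imp (box (bigAnd ([] : List Fml)))
          (imp (bigAnd ([] : List Fml)) (box (bigAnd ([] : List Fml))))) := by
        refine Prv.taut fun v => ?_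
        simp only [evalProp_imp, evalProp_box]
        cases v (box (bigAnd [])) <;> cases evalProp v (bigAnd []) <;> rfl
      exact t.mp h2
  | cons φ rest ih =>
      cases rest with
      | nil => exact h φ (by simp)
      | cons ψ rest' =>
          show Prv Ax (imp (Fml.and φ (bigAnd (ψ :: rest')))
            (box (Fml.and φ (bigAnd (ψ :: rest')))))
          have hφ := h φ (by simp)
          have hr := ih (fun χ hχ => h χ (List.mem_cons_of_mem _ hχ))
          set R := bigAnd (ψ :: rest') with hR
          have t : Prv Ax (imp (imp φ (box φ)) (imp (imp R (box R))
              (imp (Fml.and φ R) (Fml.and (box φ) (box R))))) := by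
            refine Prv.taut fun v => ?_
            simp only [evalProp_imp, evalProp_and, evalProp_box]
            cases evalProp v φ <;> cases evalProp v R <;> cases v (box φ) <;>
              cases v (box R) <;> rfl
          exact imp_trans ((t.mp hφ).mp hr) box_and

end Toolkit
section Semantics

variable (n : ℕ)

/-- The state of variable `x` in tuple `a` (out-of-range variables get `N`). -/
def stateOf (a : Fin n → Fin 3) (x : ℕ) : Fin 3 :=
  if h : 1 ≤ x ∧ x ≤ n then a ⟨x - 1, by omega⟩ else 2

/-- Finite S5 semantics: worlds are tuples in `[3]^n`, a model is a
(characteristic function of a) set of worlds. -/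
def sval (S : (Fin n → Fin 3) → Bool) (a : Fin n → Fin 3) : Fml → Prop
  | tt x => stateOf n a x = 0
  | ff x => stateOf n a x = 1
  | Fml.neg φ => ¬ sval S a φ
  | Fml.and φ ψ => sval S a φ ∧ sval S a ψ
  | box φ => ∀ b, S b = true → sval S b φ

variable {n}

@[simp] lemma sval_tt {S a x} : sval n S a (tt x) ↔ stateOf n a x = 0 := Iff.rfl
@[simp] lemma sval_ff {S a x} : sval n S a (ff x) ↔ stateOf n a x = 1 := Iff.rfl
@[simp] lemma sval_neg {S a φ} : sval n S a (Fml.neg φ) ↔ ¬ sval n S a φ := Iff.rfl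
@[simp] lemma sval_and {S a φ ψ} :
    sval n S a (Fml.and φ ψ) ↔ sval n S a φ ∧ sval n S a ψ := Iff.rfl
@[simp] lemma sval_box {S a φ} :
    sval n S a (box φ) ↔ ∀ b, S b = true → sval n S b φ := Iff.rfl

@[simp] lemma sval_imp {S a φ ψ} :
    sval n S a (imp φ ψ) ↔ (sval n S a φ → sval n S a ψ) := by
  simp [Fml.imp]

@[simp] lemma sval_dia {S a φ} :
    sval n S a (dia φ) ↔ ∃ b, S b = true ∧ sval n S b φ := by
  simp [Fml.dia]

@[simp] lemma sval_iff {S a φ ψ} :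
    sval n S a (Fml.iff φ ψ) ↔ (sval n S a φ ↔ sval n S a ψ) := by
  simp [Fml.iff]; tauto

open Classical in
lemma evalProp_decide (S : (Fin n → Fin 3) → Bool) (a : Fin n → Fin 3) (φ : Fml) :
    evalProp (fun ψ => decide (sval n S a ψ)) φ = decide (sval n S a φ) := by
  induction φ with
  | tt x => rfl
  | ff x => rfl
  | box ψ => rfl
  | neg ψ ih => simp only [evalProp_neg, ih, sval_neg, decide_not]
  | and ψ χ ih1 ih2 =>
      simp only [evalProp_and, ih1, ih2, sval_and]
      exact (Bool.decide_and _ _).symm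

/-- Soundness of `S5[Con]` for the finite semantics. -/
theorem soundness {φ : Fml} (h : Prv ConAx φ) :
    ∀ (S : (Fin n → Fin 3) → Bool) (a : Fin n → Fin 3), S a = true → sval n S a φ := by
  induction h with
  | @taut φ ht =>
      intro S a _
      classical
      have := ht (fun ψ => decide (sval n S a ψ))
      rw [evalProp_decide] at this
      exact of_decide_eq_true this
  | axK A B =>
      intro S a _
      simp only [sval_imp, sval_box]
      intro h1 h2 b hb
      exact h1 b hb (h2 b hb)
  | axT A =>
      intro S a ha
      simp only [sval_imp, sval_box]
      intro h1
      exact h1 a ha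
  | ax5 A =>
      intro S a _
      simp only [sval_imp, sval_dia, sval_box]
      intro h1 b _
      simpa using h1
  | axm hφ =>
      intro S a _
      obtain ⟨x, rfl⟩ := hφ
      simp only [sval_neg, sval_and, sval_tt, sval_ff]
      rintro ⟨h0, h1⟩
      rw [h0] at h1
      exact absurd h1 (by decide)
  | mp h1 h2 ih1 ih2 =>
      intro S a ha
      exact (sval_imp.mp (ih1 S a ha)) (ih2 S a ha)
  | nec h ih =>
      intro S a _
      simp only [sval_box]
      intro b hb
      exact ih S b hb

end Semantics
section MoreToolkit
variable {Ax : Set Fml} {A B C : Fml}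

lemma curry (h : Prv Ax (imp (Fml.and A B) C)) : Prv Ax (imp A (imp B C)) := by
  have t : Prv Ax (imp (imp (Fml.and A B) C) (imp A (imp B C))) := by
    refine Prv.taut fun v => ?_
    simp only [evalProp_imp, evalProp_and]
    cases evalProp v A <;> cases evalProp v B <;> cases evalProp v C <;> rfl
  exact t.mp h

lemma imp_and_intro (h1 : Prv Ax (imp C A)) (h2 : Prv Ax (imp C B)) :
    Prv Ax (imp C (Fml.and A B)) := by
  have t : Prv Ax (imp (imp C A) (imp (imp C B) (imp C (Fml.and A B)))) := by
    refine Prv.taut fun v => ?_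
    simp only [evalProp_imp, evalProp_and]
    cases evalProp v A <;> cases evalProp v B <;> cases evalProp v C <;> rfl
  exact (t.mp h1).mp h2

lemma neg_and_left : Prv Ax (imp (Fml.neg A) (Fml.neg (Fml.and A B))) := by
  refine Prv.taut fun v => ?_
  simp only [evalProp_imp, evalProp_and, evalProp_neg]
  cases evalProp v A <;> cases evalProp v B <;> rfl

lemma neg_and_right : Prv Ax (imp (Fml.neg B) (Fml.neg (Fml.and A B))) := by
  refine Prv.taut fun v => ?_
  simp only [evalProp_imp, evalProp_and, evalProp_neg]
  cases evalProp v A <;> cases evalProp v B <;> rfl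

/-- from `T → D` and `P → ¬D` conclude `(T ∧ P) → C` (explosion). -/
lemma clash_and {T D P : Fml} (h1 : Prv Ax (imp T D)) (h2 : Prv Ax (imp P (Fml.neg D))) :
    Prv Ax (imp (Fml.and T P) C) := by
  have t : Prv Ax (imp (imp T D) (imp (imp P (Fml.neg D)) (imp (Fml.and T P) C))) := by
    refine Prv.taut fun v => ?_
    simp only [evalProp_imp, evalProp_and, evalProp_neg]
    cases evalProp v T <;> cases evalProp v D <;> cases evalProp v P <;>
      cases evalProp v C <;> rfl
  exact (t.mp h1).mp h2

/-- from `T → D` and `P → ¬D` conclude `T → (P → C)` (explosion, curried). -/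
lemma clash_curry {T D P : Fml} (h1 : Prv Ax (imp T D)) (h2 : Prv Ax (imp P (Fml.neg D))) :
    Prv Ax (imp T (imp P C)) := curry (clash_and h1 h2)

lemma fin3_cases (k : Fin 3) : k = 0 ∨ k = 1 ∨ k = 2 := by revert k; decide

end MoreToolkit

section Isolators

open Classical

variable (n : ℕ)

/-- Canonical list of all states. -/
noncomputable def statesList : List (Fin n → Fin 3) :=
  (Finset.univ : Finset (Fin n → Fin 3)).toList

/-- Canonical list of all sets of states (as characteristic functions). -/
noncomputable def sfunsList : List ((Fin n → Fin 3) → Bool) :=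
  (Finset.univ : Finset ((Fin n → Fin 3) → Bool)).toList

lemma mem_statesList (a : Fin n → Fin 3) : a ∈ statesList n := by
  simp [statesList]

lemma mem_sfunsList (S : (Fin n → Fin 3) → Bool) : S ∈ sfunsList n := by
  simp [sfunsList]

/-- The pre-isolator of a set `S` of states. -/
noncomputable def pre (S : (Fin n → Fin 3) → Bool) : Fml :=
  bigAnd ((statesList n).map
    (fun a => if S a then dia (tupleFml a) else Fml.neg (dia (tupleFml a))))

/-- The isolator of the pair `(S, a)`. -/
noncomputable def delta (S : (Fin n → Fin 3) → Bool) (a : Fin n → Fin 3) : Fml :=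
  Fml.and (tupleFml a) (pre n S)

variable {n}

lemma chi_zero (x : ℕ) : chi 0 x = tt x := rfl
lemma chi_one (x : ℕ) : chi 1 x = ff x := rfl
lemma chi_two (x : ℕ) : chi 2 x = Nf x := rfl

lemma conAx (x : ℕ) : Prv ConAx (Fml.neg (Fml.and (tt x) (ff x))) :=
  Prv.axm ⟨x, rfl⟩

lemma ff_not_tt (x : ℕ) : Prv ConAx (imp (ff x) (Fml.neg (tt x))) := by
  have t : Prv ConAx (imp (Fml.neg (Fml.and (tt x) (ff x))) (imp (ff x) (Fml.neg (tt x)))) := by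
    refine Prv.taut fun v => ?_
    simp only [evalProp_imp, evalProp_and, evalProp_neg, evalProp_tt, evalProp_ff]
    cases v (tt x) <;> cases v (ff x) <;> rfl
  exact t.mp (conAx x)

lemma tt_not_ff (x : ℕ) : Prv ConAx (imp (tt x) (Fml.neg (ff x))) := by
  have t : Prv ConAx (imp (Fml.neg (Fml.and (tt x) (ff x))) (imp (tt x) (Fml.neg (ff x)))) := by
    refine Prv.taut fun v => ?_
    simp only [evalProp_imp, evalProp_and, evalProp_neg, evalProp_tt, evalProp_ff]
    cases v (tt x) <;> cases v (ff x) <;> rfl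
  exact t.mp (conAx x)

lemma Nf_not_tt {x : ℕ} : Prv ConAx (imp (Nf x) (Fml.neg (tt x))) := and_left

lemma Nf_not_ff {x : ℕ} : Prv ConAx (imp (Nf x) (Fml.neg (ff x))) := and_right

lemma tuple_elim {Ax : Set Fml} (a : Fin n → Fin 3) (i : Fin n) :
    Prv Ax (imp (tupleFml a) (chi (a i) (i.1 + 1))) :=
  bigAnd_elim (List.mem_map_of_mem (List.mem_finRange i))

lemma exhaustStates {Ax : Set Fml} :
    Prv Ax (bigOr ((statesList n).map tupleFml)) := by
  refine Prv.taut fun v => ?_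
  rw [evalProp_bigOr, List.any_eq_true]
  refine ⟨tupleFml (fun i => if v (tt (i.1+1)) then 0 else if v (ff (i.1+1)) then 1 else 2),
    List.mem_map_of_mem (mem_statesList _ _), ?_⟩
  rw [tupleFml, evalProp_bigAnd, List.all_eq_true]
  intro ψ hψ
  obtain ⟨i, _, rfl⟩ := List.mem_map.mp hψ
  by_cases h1 : v (tt (i.1+1)) = true
  · simp [h1, chi_zero]
  · by_cases h2 : v (ff (i.1+1)) = true
    · simp [h1, h2, chi_one]
    · simp [h1, h2, chi_two, Nf]

lemma pre_elim_pos {Ax : Set Fml} {S : (Fin n → Fin 3) → Bool} {a : Fin n → Fin 3}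
    (h : S a = true) : Prv Ax (imp (pre n S) (dia (tupleFml a))) :=
  bigAnd_elim (List.mem_map.mpr ⟨a, mem_statesList _ a, by rw [if_pos h]⟩)

lemma pre_elim_neg {Ax : Set Fml} {S : (Fin n → Fin 3) → Bool} {a : Fin n → Fin 3}
    (h : S a = false) : Prv Ax (imp (pre n S) (Fml.neg (dia (tupleFml a)))) :=
  bigAnd_elim (List.mem_map.mpr ⟨a, mem_statesList _ a, by rw [if_neg (by simp [h])]⟩)

lemma pre_rigid {Ax : Set Fml} {S : (Fin n → Fin 3) → Bool} :
    Prv Ax (imp (pre n S) (box (pre n S))) := by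
  refine bigAnd_rigid ?_
  intro ψ hψ
  obtain ⟨a, _, rfl⟩ := List.mem_map.mp hψ
  by_cases hSa : S a = true
  · rw [if_pos hSa]; exact Prv.ax5 _
  · rw [if_neg hSa]; exact neg_dia_rigid

lemma delta_bad {S : (Fin n → Fin 3) → Bool} {a : Fin n → Fin 3}
    (h : S a = false) (C : Fml) : Prv ConAx (imp (delta n S a) C) :=
  clash_and imp_dia_self (pre_elim_neg h)

lemma exhaust_pre {Ax : Set Fml} :
    Prv Ax (bigOr ((sfunsList n).map (pre n))) := by
  refine Prv.taut fun v => ?_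
  rw [evalProp_bigOr, List.any_eq_true]
  refine ⟨pre n (fun a => !v (box (Fml.neg (tupleFml a)))),
    List.mem_map_of_mem (mem_sfunsList _ _), ?_⟩
  rw [pre, evalProp_bigAnd, List.all_eq_true]
  intro ψ hψ
  obtain ⟨a, _, rfl⟩ := List.mem_map.mp hψ
  by_cases hSa : (!v (box (Fml.neg (tupleFml a)))) = true
  · rw [if_pos hSa]
    simpa using hSa
  · rw [if_neg hSa]
    simp only [Bool.not_eq_true, Bool.not_eq_true'] at hSa
    simp [hSa]

end Isolators
section Truth

lemma vars_of_nformula_tt {n x : ℕ} (h : IsNFormula n (tt x)) : 1 ≤ x ∧ x ≤ n :=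
  h (show x ∈ vars (tt x) from rfl)

lemma vars_of_nformula_ff {n x : ℕ} (h : IsNFormula n (ff x)) : 1 ≤ x ∧ x ≤ n :=
  h (show x ∈ vars (ff x) from rfl)

lemma stateOf_coord {n : ℕ} (a : Fin n → Fin 3) (i : Fin n) :
    stateOf n a (i.1 + 1) = a i := by
  have h : 1 ≤ i.1 + 1 ∧ i.1 + 1 ≤ n := ⟨by omega, by omega⟩
  rw [stateOf, dif_pos h]
  congr 1

/-- The Truth Lemma. -/
theorem truth {n : ℕ} : ∀ φ : Fml, IsNFormula n φ →
    ∀ (S : (Fin n → Fin 3) → Bool) (a : Fin n → Fin 3),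
    (sval n S a φ → Prv ConAx (imp (delta n S a) φ)) ∧
    (¬ sval n S a φ → Prv ConAx (imp (delta n S a) (Fml.neg φ))) := by
  intro φ
  induction φ with
  | tt x =>
      intro h S a
      obtain ⟨hx1, hx2⟩ := vars_of_nformula_tt h
      set i : Fin n := ⟨x - 1, by omega⟩ with hi
      have hxi : i.1 + 1 = x := by simp [hi]; omega
      have hstate : stateOf n a x = a i := by rw [← hxi, stateOf_coord]
      have hchain : Prv ConAx (imp (delta n S a) (chi (a i) x)) := by
        have h1 := tuple_elim (Ax := ConAx) a i
        rw [hxi] at h1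
        exact imp_trans and_left h1
      constructor
      · intro hs
        have h0 : a i = 0 := by rw [sval_tt, hstate] at hs; exact hs
        rw [h0, chi_zero] at hchain; exact hchain
      · intro hs
        have hne : a i ≠ 0 := fun h0 => hs (by rw [sval_tt, hstate, h0])
        rcases fin3_cases (a i) with h' | h' | h'
        · exact absurd h' hne
        · rw [h', chi_one] at hchain
          exact imp_trans hchain (ff_not_tt x)
        · rw [h', chi_two] at hchain
          exact imp_trans hchain Nf_not_tt
  | ff x =>
      intro h S a
      obtain ⟨hx1, hx2⟩ := vars_of_nformula_ff h
      set i : Fin n := ⟨x - 1, by omega⟩ with hi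
      have hxi : i.1 + 1 = x := by simp [hi]; omega
      have hstate : stateOf n a x = a i := by rw [← hxi, stateOf_coord]
      have hchain : Prv ConAx (imp (delta n S a) (chi (a i) x)) := by
        have h1 := tuple_elim (Ax := ConAx) a i
        rw [hxi] at h1
        exact imp_trans and_left h1
      constructor
      · intro hs
        have h0 : a i = 1 := by rw [sval_ff, hstate] at hs; exact hs
        rw [h0, chi_one] at hchain; exact hchain
      · intro hs
        have hne : a i ≠ 1 := fun h0 => hs (by rw [sval_ff, hstate, h0])
        rcases fin3_cases (a i) with h' | h' | h'
        · rw [h', chi_zero] at hchain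
          exact imp_trans hchain (tt_not_ff x)
        · exact absurd h' hne
        · rw [h', chi_two] at hchain
          exact imp_trans hchain Nf_not_ff
  | neg φ ih =>
      intro h S a
      have hφ : IsNFormula n φ := h
      constructor
      · intro hs
        exact (ih hφ S a).2 hs
      · intro hs
        have h1 := (ih hφ S a).1 (not_not.mp hs)
        exact imp_trans h1 dni
  | and φ ψ ihφ ihψ =>
      intro h S a
      have hφ : IsNFormula n φ := fun x hx => h (Set.mem_union_left _ hx)
      have hψ : IsNFormula n ψ := fun x hx => h (Set.mem_union_right _ hx)
      constructor
      · intro hs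
        exact imp_and_intro ((ihφ hφ S a).1 hs.1) ((ihψ hψ S a).1 hs.2)
      · intro hs
        rcases not_and_or.mp hs with h' | h'
        · exact imp_trans ((ihφ hφ S a).2 h') neg_and_left
        · exact imp_trans ((ihψ hψ S a).2 h') neg_and_right
  | box φ ih =>
      intro h S a
      have hφ : IsNFormula n φ := h
      constructor
      · intro hs
        have h1 : ∀ ψ ∈ (statesList n).map tupleFml,
            Prv ConAx (imp ψ (imp (pre n S) φ)) := by
          intro ψ hψ
          obtain ⟨b, _, rfl⟩ := List.mem_map.mp hψ
          by_cases hb : S b = true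
          · exact curry ((ih hφ S b).1 (hs b hb))
          · have hb' : S b = false := by simpa using hb
            exact clash_curry imp_dia_self (pre_elim_neg hb')
        have h4 := bigOr_elim h1
        have h5 : Prv ConAx (imp (pre n S) φ) := h4.mp exhaustStates
        exact imp_trans and_right (imp_trans pre_rigid (rm h5))
      · intro hs
        obtain ⟨b, hb, hnb⟩ : ∃ b, S b = true ∧ ¬ sval n S b φ := by
          by_contra hc
          push_neg at hc
          exact hs (fun b hb => hc b hb)
        have h1 := (ih hφ S b).2 hnb
        have h2 := dia_rm h1
        have h5 : Prv ConAx (imp (pre n S)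
            (Fml.and (dia (tupleFml b)) (box (pre n S)))) :=
          imp_and_intro (pre_elim_pos hb) pre_rigid
        have h7 : Prv ConAx (imp (pre n S) (dia (Fml.neg φ))) :=
          imp_trans h5 (imp_trans dia_and_box h2)
        have h8 : Prv ConAx (imp (dia (Fml.neg φ)) (Fml.neg (box φ))) := contrapos (rm dni)
        exact imp_trans and_right (imp_trans h7 h8)

end Truth
section NormalForm

open Classical

variable (n : ℕ)

/-- Canonical list of all (set, state) pairs. -/
noncomputable def allPairs : List (((Fin n → Fin 3) → Bool) × (Fin n → Fin 3)) :=
  (sfunsList n).product (statesList n)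

lemma mem_allPairs (p : ((Fin n → Fin 3) → Bool) × (Fin n → Fin 3)) :
    p ∈ allPairs n := by
  rcases p with ⟨S, a⟩
  rw [allPairs, List.pair_mem_product]
  exact ⟨mem_sfunsList _ _, mem_statesList _ _⟩

/-- The list of isolators of pairs where `φ` holds. -/
noncomputable def nfList (φ : Fml) : List Fml :=
  ((allPairs n).filter (fun p => decide (p.1 p.2 = true ∧ sval n p.1 p.2 φ))).map
    (fun p => delta n p.1 p.2)

/-- The normal form of `φ`. -/
noncomputable def nfFml (φ : Fml) : Fml := bigOr (nfList n φ)

variable {n}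

lemma exhaust_delta :
    Prv ConAx (bigOr ((allPairs n).map (fun p => delta n p.1 p.2))) := by
  have t : Prv ConAx (imp
      (Fml.and (bigOr ((statesList n).map tupleFml)) (bigOr ((sfunsList n).map (pre n))))
      (bigOr ((allPairs n).map (fun p => delta n p.1 p.2)))) := by
    refine Prv.taut fun v => ?_
    simp only [evalProp_imp, evalProp_and, evalProp_bigOr]
    cases h1 : ((statesList n).map tupleFml).any (evalProp v) with
    | false => rfl
    | true =>
        cases h2 : ((sfunsList n).map (pre n)).any (evalProp v) with
        | false => rfl
        | true =>
            obtain ⟨ψ1, hm1, hv1⟩ := List.any_eq_true.mp h1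
            obtain ⟨ψ2, hm2, hv2⟩ := List.any_eq_true.mp h2
            obtain ⟨a, _, rfl⟩ := List.mem_map.mp hm1
            obtain ⟨S, _, rfl⟩ := List.mem_map.mp hm2
            have hmem : delta n S a ∈ (allPairs n).map (fun p => delta n p.1 p.2) :=
              List.mem_map_of_mem (mem_allPairs n (S, a))
            have : ((allPairs n).map (fun p => delta n p.1 p.2)).any (evalProp v) = true :=
              List.any_eq_true.mpr ⟨delta n S a, hmem, by
                simp only [delta, evalProp_and, hv1, hv2]; rfl⟩
            simp [this]
  exact t.mp (and_intro_rule exhaustStates exhaust_pre)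

lemma imp_weaken_under {Ax : Set Fml} {D N C : Fml} (h : Prv Ax (imp D N)) :
    Prv Ax (imp D (imp C N)) := by
  have t : Prv Ax (imp (imp D N) (imp D (imp C N))) := by
    refine Prv.taut fun v => ?_
    simp only [evalProp_imp]
    cases evalProp v D <;> cases evalProp v N <;> cases evalProp v C <;> rfl
  exact t.mp h

lemma imp_neg_to_any {Ax : Set Fml} {D C N : Fml} (h : Prv Ax (imp D (Fml.neg C))) :
    Prv Ax (imp D (imp C N)) := by
  have t : Prv Ax (imp (imp D (Fml.neg C)) (imp D (imp C N))) := by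
    refine Prv.taut fun v => ?_
    simp only [evalProp_imp, evalProp_neg]
    cases evalProp v D <;> cases evalProp v N <;> cases evalProp v C <;> rfl
  exact t.mp h

/-- The normal form theorem. -/
theorem nf_iff {φ : Fml} (hφ : IsNFormula n φ) :
    Prv ConAx (Fml.iff φ (nfFml n φ)) := by
  have hleft : Prv ConAx (imp (nfFml n φ) φ) := by
    refine bigOr_elim ?_
    intro ψ hψ
    obtain ⟨p, hpf, rfl⟩ := List.mem_map.mp hψ
    have hp : p.1 p.2 = true ∧ sval n p.1 p.2 φ := by
      have := List.mem_filter.mp hpf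
      exact of_decide_eq_true this.2
    exact (truth φ hφ p.1 p.2).1 hp.2
  have hright : Prv ConAx (imp φ (nfFml n φ)) := by
    have h1 : ∀ ψ ∈ (allPairs n).map (fun p => delta n p.1 p.2),
        Prv ConAx (imp ψ (imp φ (nfFml n φ))) := by
      intro ψ hψ
      obtain ⟨p, _, rfl⟩ := List.mem_map.mp hψ
      by_cases hv : p.1 p.2 = true
      · by_cases hsv : sval n p.1 p.2 φ
        · have hmem : delta n p.1 p.2 ∈ nfList n φ :=
            List.mem_map_of_mem
              (List.mem_filter_of_mem (mem_allPairs n p) (decide_eq_true ⟨hv, hsv⟩))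
          exact imp_weaken_under (bigOr_intro hmem)
        · exact imp_neg_to_any ((truth φ hφ p.1 p.2).2 hsv)
      · exact delta_bad (Bool.not_eq_true _ ▸ eq_false_of_ne_true hv) _
    exact (bigOr_elim h1).mp exhaust_delta
  exact and_intro_rule hright hleft

lemma iff_trans_of {Ax : Set Fml} {A B N : Fml} (h1 : Prv Ax (Fml.iff A N))
    (h2 : Prv Ax (Fml.iff B N)) : Prv Ax (Fml.iff A B) := by
  have t : Prv Ax (imp (Fml.iff A N) (imp (Fml.iff B N) (Fml.iff A B))) := by
    refine Prv.taut fun v => ?_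
    simp only [evalProp_imp, evalProp_iff]
    cases evalProp v A <;> cases evalProp v B <;> cases evalProp v N <;> rfl
  exact (t.mp h1).mp h2

/-- Completeness: semantically equivalent `n`-formulas are provably equivalent. -/
theorem complete {φ ψ : Fml} (hφ : IsNFormula n φ) (hψ : IsNFormula n ψ)
    (hsem : ∀ S a, S a = true → (sval n S a φ ↔ sval n S a ψ)) :
    Prv ConAx (Fml.iff φ ψ) := by
  have hlist : nfList n φ = nfList n ψ := by
    unfold nfList
    congr 1
    refine List.filter_congr ?_
    intro p _
    refine decide_eq_decide.mpr ?_
    constructor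
    · rintro ⟨hv, hs⟩; exact ⟨hv, (hsem _ _ hv).mp hs⟩
    · rintro ⟨hv, hs⟩; exact ⟨hv, (hsem _ _ hv).mpr hs⟩
  have h1 := nf_iff hφ
  have h2 := nf_iff hψ
  rw [nfFml, hlist] at h1
  exact iff_trans_of h1 h2

end NormalForm
section SemDelta

variable {n : ℕ}

lemma sval_bigAnd {S a} {l : List Fml} :
    sval n S a (bigAnd l) ↔ ∀ φ ∈ l, sval n S a φ := by
  induction l with
  | nil =>
      simp only [List.not_mem_nil, false_implies, implies_true, iff_true]
      show ¬ sval n S a Fml.bot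
      simp [Fml.bot]
  | cons φ rest ih =>
      cases rest with
      | nil => simp [bigAnd]
      | cons ψ rest' =>
          show sval n S a (Fml.and φ (bigAnd (ψ :: rest'))) ↔ _
          rw [sval_and, ih]
          simp

lemma sval_bigOr {S a} {l : List Fml} :
    sval n S a (bigOr l) ↔ ∃ φ ∈ l, sval n S a φ := by
  induction l with
  | nil =>
      simp only [bigOr, List.not_mem_nil, false_and, exists_false, iff_false]
      simp only [Fml.bot, sval_and, sval_tt, sval_neg]
      rintro ⟨h1, h2⟩; exact h2 h1
  | cons φ rest ih =>
      cases rest with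
      | nil => simp [bigOr]
      | cons ψ rest' =>
          show sval n S a (Fml.or φ (bigOr (ψ :: rest'))) ↔ _
          have : sval n S a (Fml.or φ (bigOr (ψ :: rest'))) ↔
              sval n S a φ ∨ sval n S a (bigOr (ψ :: rest')) := by
            simp [Fml.or]; tauto
          rw [this, ih]
          simp

lemma sval_chi {S a} {k : Fin 3} {i : Fin n} :
    sval n S a (chi k (i.1 + 1)) ↔ a i = k := by
  rcases fin3_cases k with hk | hk | hk <;> subst hk
  · rw [chi_zero, sval_tt, stateOf_coord]
  · rw [chi_one, sval_ff, stateOf_coord]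
  · rw [chi_two]
    simp only [Nf, sval_and, sval_neg, sval_tt, sval_ff, stateOf_coord]
    rcases fin3_cases (a i) with h | h | h <;> rw [h] <;> decide
  
lemma sval_tuple {S a b} : sval n S a (tupleFml b) ↔ a = b := by
  rw [tupleFml, sval_bigAnd]
  constructor
  · intro h
    funext i
    have := h _ (List.mem_map_of_mem (List.mem_finRange i))
    exact sval_chi.mp this
  · rintro rfl
    intro φ hφ
    obtain ⟨i, _, rfl⟩ := List.mem_map.mp hφ
    exact sval_chi.mpr rfl

lemma sval_pre {S' a'} {S : (Fin n → Fin 3) → Bool} :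
    sval n S' a' (pre n S) ↔ S = S' := by
  rw [pre, sval_bigAnd]
  constructor
  · intro h
    funext b
    have hb := h _ (List.mem_map_of_mem (mem_statesList n b))
    cases hSb : S b with
    | true =>
        rw [if_pos hSb] at hb
        rw [sval_dia] at hb
        obtain ⟨c, hc, hct⟩ := hb
        rw [sval_tuple] at hct
        subst hct
        exact hc.symm
    | false =>
        rw [if_neg (by simp [hSb])] at hb
        rw [sval_neg, sval_dia] at hb
        cases h' : S' b with
        | false => rfl
        | true => exact absurd ⟨b, h', sval_tuple.mpr rfl⟩ hb
  · rintro rfl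
    intro φ hφ
    obtain ⟨b, _, rfl⟩ := List.mem_map.mp hφ
    by_cases hSb : S b = true
    · rw [if_pos hSb, sval_dia]
      exact ⟨b, hSb, sval_tuple.mpr rfl⟩
    · rw [if_neg hSb, sval_neg, sval_dia]
      rintro ⟨c, hc, hct⟩
      rw [sval_tuple] at hct
      subst hct
      exact hSb hc

lemma sval_delta {S' a'} {S : (Fin n → Fin 3) → Bool} {a} :
    sval n S' a' (delta n S a) ↔ S = S' ∧ a' = a := by
  rw [delta, sval_and, sval_tuple, sval_pre]
  tauto

end SemDelta

section Vars

variable {n : ℕ}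

lemma vars_bigAnd_subset {l : List Fml} {V : Set ℕ} (h : ∀ φ ∈ l, vars φ ⊆ V)
    (hl : l ≠ []) : vars (bigAnd l) ⊆ V := by
  induction l with
  | nil => exact absurd rfl hl
  | cons φ rest ih =>
      cases rest with
      | nil => exact h φ (by simp)
      | cons ψ rest' =>
          show vars (Fml.and φ (bigAnd (ψ :: rest'))) ⊆ V
          have h1 := h φ (by simp)
          have h2 := ih (fun χ hχ => h χ (List.mem_cons_of_mem _ hχ)) (by simp)
          exact Set.union_subset h1 h2

lemma vars_bigOr_subset {l : List Fml} {V : Set ℕ} (h : ∀ φ ∈ l, vars φ ⊆ V)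
    (hl : l ≠ []) : vars (bigOr l) ⊆ V := by
  induction l with
  | nil => exact absurd rfl hl
  | cons φ rest ih =>
      cases rest with
      | nil => exact h φ (by simp)
      | cons ψ rest' =>
          show vars (Fml.or φ (bigOr (ψ :: rest'))) ⊆ V
          have h1 := h φ (by simp)
          have h2 := ih (fun χ hχ => h χ (List.mem_cons_of_mem _ hχ)) (by simp)
          exact Set.union_subset h1 h2

lemma vars_chi (k : Fin 3) (x : ℕ) : vars (chi k x) ⊆ {x} := by
  rcases fin3_cases k with hk | hk | hk <;> subst hk
  · rw [chi_zero]; exact subset_rfl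
  · rw [chi_one]; exact subset_rfl
  · rw [chi_two]
    show vars (Fml.and (Fml.neg (tt x)) (Fml.neg (ff x))) ⊆ {x}
    exact Set.union_subset subset_rfl subset_rfl

lemma vars_dia (φ : Fml) : vars (dia φ) = vars φ := rfl

lemma isNFormula_tuple (hn : 1 ≤ n) (a : Fin n → Fin 3) : IsNFormula n (tupleFml a) := by
  rw [tupleFml]
  refine vars_bigAnd_subset ?_ ?_
  · intro φ hφ
    obtain ⟨i, _, rfl⟩ := List.mem_map.mp hφ
    refine (vars_chi _ _).trans ?_
    intro x hx
    rw [Set.mem_singleton_iff] at hx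
    subst hx
    exact ⟨by omega, by omega⟩
  · have : ((List.finRange n).map (fun i : Fin n => chi (a i) (i.1 + 1))).length = n := by
      simp
    intro hnil
    rw [hnil] at this
    simp at this
    omega

lemma statesList_ne_nil : statesList n ≠ [] := by
  have h : (statesList n).length = Fintype.card (Fin n → Fin 3) := by
    simp [statesList]
  exact List.ne_nil_of_length_pos (by rw [h]; exact Fintype.card_pos)

lemma isNFormula_pre (hn : 1 ≤ n) (S : (Fin n → Fin 3) → Bool) :
    IsNFormula n (pre n S) := by
  rw [pre]
  refine vars_bigAnd_subset ?_ ?_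
  · intro φ hφ
    obtain ⟨b, _, rfl⟩ := List.mem_map.mp hφ
    by_cases hb : S b = true
    · rw [if_pos hb, vars_dia]
      exact isNFormula_tuple hn b
    · rw [if_neg hb]
      show vars (dia (tupleFml b)) ⊆ _
      rw [vars_dia]
      exact isNFormula_tuple hn b
  · simp [statesList_ne_nil]

lemma isNFormula_delta (hn : 1 ≤ n) (S : (Fin n → Fin 3) → Bool) (a : Fin n → Fin 3) :
    IsNFormula n (delta n S a) :=
  Set.union_subset (isNFormula_tuple hn a) (isNFormula_pre hn S)

end Vars
section Counting

open Classical

variable (n : ℕ)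

/-- The type of pairs `(S, a)` with `a ∈ S`. -/
def PairsT := {p : ((Fin n → Fin 3) → Bool) × (Fin n → Fin 3) // p.1 p.2 = true}

noncomputable instance : Fintype (PairsT n) := by unfold PairsT; infer_instance
noncomputable instance : DecidableEq (PairsT n) := by unfold PairsT; infer_instance

/-- Semantic value of an `n`-formula on valid pairs. -/
noncomputable def semB (φ : {f : Fml // IsNFormula n f}) : PairsT n → Bool :=
  fun p => decide (sval n p.1.1 p.1.2 φ.1)

variable {n}

lemma semB_sound {φ ψ : {f : Fml // IsNFormula n f}}
    (h : Prv ConAx (Fml.iff φ.1 ψ.1)) : semB n φ = semB n ψ := by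
  funext p
  have hs := soundness h p.1.1 p.1.2 p.2
  rw [sval_iff] at hs
  exact decide_eq_decide.mpr hs

variable (n)

/-- Semantic value on the quotient. -/
noncomputable def semQ : Quot (fun φ ψ : {f : Fml // IsNFormula n f} =>
    Prv ConAx (Fml.iff φ.1 ψ.1)) → (PairsT n → Bool) :=
  Quot.lift (semB n) (fun _ _ h => semB_sound h)

variable {n}

lemma semQ_injective : Function.Injective (semQ n) := by
  intro q1 q2
  induction q1 using Quot.ind with | _ φ =>
  induction q2 using Quot.ind with | _ ψ =>
  intro h
  apply Quot.sound
  refine complete φ.2 ψ.2 ?_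
  intro S a hv
  have h2 := congrFun h (⟨(S, a), hv⟩ : PairsT n)
  exact decide_eq_decide.mp h2

lemma semQ_surjective (hn : 1 ≤ n) : Function.Surjective (semQ n) := by
  intro g
  set L := (allPairs n).filter
    (fun p => decide (∃ h : p.1 p.2 = true, g ⟨p, h⟩ = true)) with hLdef
  by_cases hL : L = []
  · refine ⟨Quot.mk _ ⟨Fml.and (tt 1) (Fml.neg (tt 1)), ?_⟩, ?_⟩
    · intro x hx
      rcases hx with hx | hx <;>
        · have hx1 : x = 1 := hx
          subst hx1
          exact ⟨le_refl 1, hn⟩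
    · funext p
      show decide (sval n p.1.1 p.1.2 (Fml.and (tt 1) (Fml.neg (tt 1)))) = g p
      have h1 : ¬ sval n p.1.1 p.1.2 (Fml.and (tt 1) (Fml.neg (tt 1))) := by
        simp only [sval_and, sval_neg, not_and, not_not]
        exact fun h => h
      have h2 : g p = false := by
        by_contra hg
        rw [Bool.not_eq_false] at hg
        have hmem : p.1 ∈ L := by
          rw [hLdef]
          refine List.mem_filter_of_mem (mem_allPairs n p.1) (decide_eq_true ?_)
          refine ⟨p.2, ?_⟩
          have : (⟨p.1, p.2⟩ : PairsT n) = p := rfl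
          rw [this]
          exact hg
        rw [hL] at hmem
        exact absurd hmem List.not_mem_nil
      rw [h2]
      exact decide_eq_false h1
  · refine ⟨Quot.mk _ ⟨bigOr (L.map fun p => delta n p.1 p.2), ?_⟩, ?_⟩
    · refine vars_bigOr_subset ?_ (by simpa using hL)
      intro φ hφ
      obtain ⟨p, _, rfl⟩ := List.mem_map.mp hφ
      exact isNFormula_delta hn _ _
    · funext q
      show decide (sval n q.1.1 q.1.2 (bigOr (L.map fun p => delta n p.1 p.2))) = g q
      have hiff : sval n q.1.1 q.1.2 (bigOr (L.map fun p => delta n p.1 p.2)) ↔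
          g q = true := by
        rw [sval_bigOr]
        constructor
        · rintro ⟨φ, hφ, hs⟩
          obtain ⟨p, hpL, rfl⟩ := List.mem_map.mp hφ
          rw [sval_delta] at hs
          have hpq : p = q.1 := Prod.ext_iff.mpr ⟨hs.1, hs.2.symm⟩
          rw [hLdef] at hpL
          have hpred := of_decide_eq_true ((List.mem_filter.mp hpL).2)
          obtain ⟨hv, hg⟩ := hpred
          have : (⟨p, hv⟩ : PairsT n) = q := Subtype.ext hpq
          rw [this] at hg
          exact hg
        · intro hg
          refine ⟨delta n q.1.1 q.1.2, ?_, sval_delta.mpr ⟨rfl, rfl⟩⟩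
          refine List.mem_map.mpr ⟨q.1, ?_, rfl⟩
          rw [hLdef]
          refine List.mem_filter_of_mem (mem_allPairs n q.1) (decide_eq_true ?_)
          refine ⟨q.2, ?_⟩
          have : (⟨q.1, q.2⟩ : PairsT n) = q := rfl
          rw [this]
          exact hg
      cases hgq : g q with
      | true => exact decide_eq_true (hiff.mpr hgq)
      | false =>
          refine decide_eq_false ?_
          intro hs
          rw [hgq] at hiff
          exact Bool.false_ne_true (hiff.mp hs)

/-- `PairsT` as a sigma type. -/
def pairsEquiv : PairsT n ≃ Σ a : Fin n → Fin 3,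
    {f : (Fin n → Fin 3) → Bool // f a = true} where
  toFun p := ⟨p.1.2, p.1.1, p.2⟩
  invFun s := ⟨(s.2.1, s.1), s.2.2⟩
  left_inv p := by rcases p with ⟨⟨S, a⟩, h⟩; rfl
  right_inv s := by rcases s with ⟨a, f, h⟩; rfl

/-- sets containing `a` correspond to subsets of the complement of `{a}`. -/
def subEquiv (a : Fin n → Fin 3) :
    {f : (Fin n → Fin 3) → Bool // f a = true} ≃ ({b : Fin n → Fin 3 // b ≠ a} → Bool) where
  toFun f b := f.1 b.1
  invFun g := ⟨fun c => if h : c = a then true else g ⟨c, h⟩, by simp⟩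
  left_inv f := by
    apply Subtype.ext
    funext c
    by_cases h : c = a
    · subst h
      simp [f.2]
    · simp [h]
  right_inv g := by
    funext b
    simp [b.2]

lemma card_PairsT : Fintype.card (PairsT n) = 3 ^ n * 2 ^ (3 ^ n - 1) := by
  rw [Fintype.card_congr (pairsEquiv (n := n)), Fintype.card_sigma]
  have hst : Fintype.card (Fin n → Fin 3) = 3 ^ n := by
    simp [Fintype.card_fun]
  have hcard : ∀ a : Fin n → Fin 3,
      Fintype.card {f : (Fin n → Fin 3) → Bool // f a = true} = 2 ^ (3 ^ n - 1) := by
    intro a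
    rw [Fintype.card_congr (subEquiv a), Fintype.card_fun]
    have h1 : Fintype.card {b : Fin n → Fin 3 // b ≠ a} =
        Fintype.card (Fin n → Fin 3) - 1 := by
      have := Fintype.card_subtype_compl (fun b : Fin n → Fin 3 => b = a)
      rw [Fintype.card_subtype_eq] at this
      exact this
    rw [h1, hst]
    simp
  simp only [hcard]
  rw [Finset.sum_const, Finset.card_univ, hst, smul_eq_mul]

end Counting

/-- up to S5[Con]-provable equivalence there are exactly
`2^(3^n · 2^(3^n − 1))` n-variable formulas. -/
theorem count_n_formulas_S5Con (n : ℕ) (hn : 1 ≤ n) :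
    Nat.card (Quot (fun φ ψ : {f : Fml // IsNFormula n f} =>
      Prv ConAx (Fml.iff φ.1 ψ.1))) = 2 ^ (3 ^ n * 2 ^ (3 ^ n - 1)) := by
  have hbij : Function.Bijective (semQ n) := ⟨semQ_injective, semQ_surjective hn⟩
  rw [Nat.card_eq_of_bijective _ hbij, Nat.card_eq_fintype_card, Fintype.card_fun,
    card_PairsT]
  simp

end KripkeModal
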